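/- Let G = (V, E) be a finite undirected graph, let v1 ∈ V, and let R be a finite family of subsets X ⊆ V with v1 ∈ X for all X ∈ R. Then the number of pairs (X, (X1, X2)) where X ∈ R and (X1, X2) is a consistent cut of G[X] with v1 ∈ X1 is congruent modulo 2 to the number of X ∈ R such that G[X] is connected. -/

import Mathlib

namespace Stmt3Aux

variable {V : Type*} {G : SimpleGraph V} {X X1 X2 : Set V} {v1 w : V}

/-- Reachability within a vertex subset `X`. -/
def reach (G : SimpleGraph V) (X : Set V) : V → V → Prop :=
  Relation.ReflTransGen (fun u v => G.Adj u v ∧ u ∈ X ∧ v ∈ X)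

lemma reach_symm {a b : V} (h : reach G X a b) : reach G X b a :=
  haveI : Std.Symm (fun u v => G.Adj u v ∧ u ∈ X ∧ v ∈ X) :=
    ⟨fun _ _ hr => ⟨hr.1.symm, hr.2.2, hr.2.1⟩⟩
  Std.Symm.symm (self := Relation.ReflTransGen.symmetric) _ _ h

lemma mem_of_reach {a b : V} (h : reach G X a b) (ha : a ∈ X) : b ∈ X := by
  induction h with
  | refl => exact ha
  | tail _ h2 _ => exact h2.2.2

lemma reach_of_conn (hc : (G.induce X).Connected) (hv1 : v1 ∈ X) {w : V} (hw : w ∈ X) :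
    reach G X v1 w := by
  have h := hc.preconnected ⟨v1, hv1⟩ ⟨w, hw⟩
  rw [SimpleGraph.reachable_iff_reflTransGen] at h
  exact Relation.ReflTransGen.lift (p := fun u v => G.Adj u v ∧ u ∈ X ∧ v ∈ X) Subtype.val
    (fun a b hab => ⟨hab, a.2, b.2⟩) _ _ h

lemma reachable_of_reach {a b : V} (hab : reach G X a b) :
    ∀ (ha : a ∈ X) (hb : b ∈ X), (G.induce X).Reachable ⟨a, ha⟩ ⟨b, hb⟩ := by
  induction hab with
  | refl => intro ha hb; exact SimpleGraph.Reachable.refl _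
  | tail h1 h2 ih =>
      intro ha hc
      exact (ih ha h2.2.1).trans (SimpleGraph.Adj.reachable (by exact h2.1))

lemma conn_of_reach (hv1 : v1 ∈ X) (h : ∀ w ∈ X, reach G X v1 w) :
    (G.induce X).Connected := by
  rw [SimpleGraph.connected_iff]
  refine ⟨fun a b => ?_, ⟨⟨v1, hv1⟩⟩⟩
  have hab : reach G X a.1 b.1 := (reach_symm (h a.1 a.2)).trans (h b.1 b.2)
  have := reachable_of_reach hab a.2 b.2
  simpa using this

/-- A consistent cut of `G[X]` with `v1` on the left side. -/
def Cut (G : SimpleGraph V) (v1 : V) (X X1 X2 : Set V) : Prop :=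
  X1 ∪ X2 = X ∧ X1 ∩ X2 = ∅ ∧ v1 ∈ X1 ∧
    ∀ u v, G.Adj u v → ¬(u ∈ X1 ∧ v ∈ X2)

lemma cut_toggle (hcut : Cut G v1 X X1 X2) (hw : w ∈ X) (hnr : ¬ reach G X v1 w) :
    Cut G v1 X (X1 \ {v | reach G X w v} ∪ X2 ∩ {v | reach G X w v})
      (X2 \ {v | reach G X w v} ∪ X1 ∩ {v | reach G X w v}) := by
  obtain ⟨hun, hint, hv1, hcons⟩ := hcut
  set C : Set V := {v | reach G X w v} with hC
  have hX1X : X1 ⊆ X := by rw [← hun]; exact Set.subset_union_left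
  have hX2X : X2 ⊆ X := by rw [← hun]; exact Set.subset_union_right
  have h12 : ∀ v, ¬(v ∈ X1 ∧ v ∈ X2) := fun v hv =>
    Set.eq_empty_iff_forall_notMem.mp hint v ⟨hv.1, hv.2⟩
  have key : ∀ u v, G.Adj u v → u ∈ X → v ∈ X → (u ∈ C ↔ v ∈ C) := by
    intro u v hadj hu hv
    constructor
    · intro h; exact Relation.ReflTransGen.tail h ⟨hadj, hu, hv⟩
    · intro h; exact Relation.ReflTransGen.tail h ⟨hadj.symm, hv, hu⟩
  refine ⟨?_, ?_, ?_, ?_⟩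
  · ext v
    rw [← hun]
    simp only [Set.mem_union, Set.mem_diff, Set.mem_inter_iff]
    tauto
  · ext v
    simp only [Set.mem_inter_iff, Set.mem_union, Set.mem_diff, Set.mem_empty_iff_false,
      iff_false]
    have := h12 v
    tauto
  · exact Or.inl ⟨hv1, fun h => hnr (reach_symm h)⟩
  · rintro u v hadj ⟨hu, hv⟩
    have huX : u ∈ X := by
      rcases hu with h | h
      exacts [hX1X h.1, hX2X h.1]
    have hvX : v ∈ X := by
      rcases hv with h | h
      exacts [hX2X h.1, hX1X h.1]
    have hiff := key u v hadj huX hvX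
    rcases hu with ⟨hu1, huC⟩ | ⟨hu2, huC⟩ <;> rcases hv with ⟨hv2, hvC⟩ | ⟨hv1', hvC⟩
    · exact hcons u v hadj ⟨hu1, hv2⟩
    · exact huC (hiff.mpr hvC)
    · exact hvC (hiff.mp huC)
    · exact hcons v u hadj.symm ⟨hv1', hu2⟩

lemma cut_unique (hcut : Cut G v1 X X1 X2) (hconn : ∀ w ∈ X, reach G X v1 w) :
    X1 = X ∧ X2 = ∅ := by
  obtain ⟨hun, hint, hv1, hcons⟩ := hcut
  have hX1X : X1 ⊆ X := by rw [← hun]; exact Set.subset_union_left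
  have hX2X : X2 ⊆ X := by rw [← hun]; exact Set.subset_union_right
  have key : ∀ a b, reach G X a b → a ∈ X1 → b ∈ X1 := by
    intro a b h
    induction h with
    | refl => exact id
    | @tail b c h1 h2 ih =>
        intro ha
        have hb := ih ha
        have hcX : c ∈ X1 ∪ X2 := by rw [hun]; exact h2.2.2
        rcases hcX with h | h
        · exact h
        · exact absurd ⟨hb, h⟩ (hcons b c h2.1)
  have hX1 : X ⊆ X1 := fun u hu => key v1 u (hconn u hu) hv1
  refine ⟨hX1X.antisymm hX1, Set.eq_empty_iff_forall_notMem.mpr fun v hv => ?_⟩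
  exact Set.eq_empty_iff_forall_notMem.mp hint v ⟨hX1 (hX2X hv), hv⟩

end Stmt3Aux

open Stmt3Aux in
/-- The number of pairs `(X, (X1, X2))` with `X ∈ R` and `(X1, X2)` a consistent cut of
`G[X]` with `v1 ∈ X1` is congruent mod 2 to the number of `X ∈ R` with `G[X]` connected. -/
theorem stmt3 {V : Type*} [Fintype V] (G : SimpleGraph V) (v1 : V)
    (R : Finset (Set V)) (hR : ∀ X ∈ R, v1 ∈ X) :
    Nat.card {q : Set V × Set V × Set V //
        q.1 ∈ R ∧ q.2.1 ∪ q.2.2 = q.1 ∧ q.2.1 ∩ q.2.2 = ∅ ∧ v1 ∈ q.2.1 ∧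
        ∀ u v, G.Adj u v → ¬(u ∈ q.2.1 ∧ v ∈ q.2.2)} ≡
      Nat.card {X : Set V // X ∈ R ∧ (G.induce X).Connected} [MOD 2] := by
  classical
  haveI : Finite (Set V) := Finite.of_equiv (V → Prop) (Equiv.refl _)
  set T := {q : Set V × Set V × Set V //
        q.1 ∈ R ∧ q.2.1 ∪ q.2.2 = q.1 ∧ q.2.1 ∩ q.2.2 = ∅ ∧ v1 ∈ q.2.1 ∧
        ∀ u v, G.Adj u v → ¬(u ∈ q.2.1 ∧ v ∈ q.2.2)} with hT
  haveI : Fintype T := Fintype.ofFinite T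
  -- a canonical vertex unreachable from `v1` (when `G[X]` is disconnected)
  have hex : ∀ X : Set V, ∃ u, (v1 ∈ X ∧ ¬(G.induce X).Connected) →
      u ∈ X ∧ ¬ reach G X v1 u := by
    intro X
    by_cases h : v1 ∈ X ∧ ¬(G.induce X).Connected
    · have h' : ∃ u, u ∈ X ∧ ¬ reach G X v1 u := by
        by_contra hh
        push_neg at hh
        exact h.2 (conn_of_reach h.1 hh)
      obtain ⟨u, hu⟩ := h'
      exact ⟨u, fun _ => hu⟩
    · exact ⟨v1, fun hh => absurd hh h⟩
  let w : Set V → V := fun X => (hex X).choose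
  have hw : ∀ X : Set V, v1 ∈ X → ¬(G.induce X).Connected →
      w X ∈ X ∧ ¬ reach G X v1 (w X) :=
    fun X h1 h2 => (hex X).choose_spec ⟨h1, h2⟩
  let C : Set V → Set V := fun X => {v | reach G X (w X) v}
  -- the involution on T
  let f : T → T := fun q =>
    if hc : (G.induce q.1.1).Connected then q
    else
      ⟨(q.1.1, q.1.2.1 \ C q.1.1 ∪ q.1.2.2 ∩ C q.1.1,
          q.1.2.2 \ C q.1.1 ∪ q.1.2.1 ∩ C q.1.1),
        q.2.1, cut_toggle q.2.2 (hw _ (hR _ q.2.1) hc).1 (hw _ (hR _ q.2.1) hc).2⟩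
  have hinv : ∀ q : T, f (f q) = q := by
    rintro ⟨⟨X, X1, X2⟩, hq⟩
    by_cases hc : (G.induce X).Connected
    · simp only [f, dif_pos hc]
    · simp only [f, dif_neg hc]
      have e1 : (X1 \ C X ∪ X2 ∩ C X) \ C X ∪ (X2 \ C X ∪ X1 ∩ C X) ∩ C X = X1 := by
        ext v
        by_cases hvC : v ∈ C X <;>
          simp only [Set.mem_union, Set.mem_diff, Set.mem_inter_iff, hvC] <;> tauto
      have e2 : (X2 \ C X ∪ X1 ∩ C X) \ C X ∪ (X1 \ C X ∪ X2 ∩ C X) ∩ C X = X2 := by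
        ext v
        by_cases hvC : v ∈ C X <;>
          simp only [Set.mem_union, Set.mem_diff, Set.mem_inter_iff, hvC] <;> tauto
      exact Subtype.ext (Prod.ext rfl (Prod.ext e1 e2))
  have hne : ∀ q : T, ¬(G.induce q.1.1).Connected → f q ≠ q := by
    rintro ⟨⟨X, X1, X2⟩, hq⟩ hc heq
    have hwX := hw X (hR X hq.1) hc
    have hwC : w X ∈ C X := Relation.ReflTransGen.refl
    have h1 : (f ⟨(X, X1, X2), hq⟩).1.2.1 = X1 := by rw [heq]
    simp only [f, dif_neg hc] at h1
    have hwU : w X ∈ X1 ∪ X2 := by rw [hq.2.1]; exact hwX.1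
    have h12 : ∀ v, ¬(v ∈ X1 ∧ v ∈ X2) := fun v hv =>
      Set.eq_empty_iff_forall_notMem.mp hq.2.2.1 v ⟨hv.1, hv.2⟩
    rcases hwU with hw1 | hw2
    · have hm : w X ∈ X1 \ C X ∪ X2 ∩ C X := by rw [h1]; exact hw1
      rcases hm with h | h
      · exact h.2 hwC
      · exact h12 _ ⟨hw1, h.1⟩
    · have hw1 : w X ∈ X1 := by rw [← h1]; exact Or.inr ⟨hw2, hwC⟩
      exact h12 _ ⟨hw1, hw2⟩
  -- fixed points of f are exactly cuts over connected X, which are unique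
  have hfix : ∀ q : T, f q = q ↔ (G.induce q.1.1).Connected := by
    intro q
    constructor
    · intro h
      by_contra hc
      exact hne q hc h
    · intro hc
      simp only [f, dif_pos hc]
  let e : Function.fixedPoints f ≃ {X : Set V // X ∈ R ∧ (G.induce X).Connected} :=
    { toFun := fun p => ⟨p.1.1.1, p.1.2.1, (hfix p.1).mp p.2⟩
      invFun := fun s =>
        ⟨⟨(s.1, s.1, ∅), s.2.1, Set.union_empty _, Set.inter_empty _, hR _ s.2.1,
            fun u v _ h => h.2⟩, by
          show f _ = _
          exact dif_pos s.2.2⟩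
      left_inv := by
        rintro ⟨⟨⟨X, X1, X2⟩, hq⟩, hp⟩
        have hc : (G.induce X).Connected := (hfix _).mp hp
        have hconn : ∀ u ∈ X, reach G X v1 u :=
          fun u hu => reach_of_conn hc (hR X hq.1) hu
        obtain ⟨h1, h2⟩ := cut_unique hq.2 hconn
        have h1' : X1 = X := h1
        have h2' : X2 = ∅ := h2
        exact Subtype.ext (Subtype.ext (Prod.ext rfl (Prod.ext h1'.symm h2'.symm)))
      right_inv := fun s => Subtype.ext rfl }
  -- the parity argument via `card_fixedPoints_modEq` at p = 2
  let fE : Function.End T := f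
  have hf2 : fE ^ 2 ^ 1 = 1 := by
    have h : fE ^ 2 ^ 1 = fE * fE := by norm_num [pow_two]
    rw [h]
    funext q
    exact hinv q
  have hmod := Equiv.Perm.card_fixedPoints_modEq (p := 2) (n := 1) hf2
  calc Nat.card T = Fintype.card T := Nat.card_eq_fintype_card
    _ ≡ Fintype.card (Function.fixedPoints f) [MOD 2] := hmod
    _ = Nat.card (Function.fixedPoints f) := Nat.card_eq_fintype_card.symm
    _ = Nat.card {X : Set V // X ∈ R ∧ (G.induce X).Connected} := Nat.card_congr e
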